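/- Let K be an algebraically closed field of characteristic 2 and X = {z⁴ + B(x₁,x₂,x₃) = 0} ⊂ ℙ³(K) a normal quartic surface (B a homogeneous quartic). Then |Sing(X)| ≤ 7. -/

import Mathlib

open MvPolynomial Finsupp

set_option linter.unusedSectionVars false
set_option maxHeartbeats 1000000

section Char2Aux
variable {K : Type*} [Field K] [CharP K 2]

lemma fs3_eq_iff (p q : Fin 3 →₀ ℕ) : p = q ↔ p 0 = q 0 ∧ p 1 = q 1 ∧ p 2 = q 2 := by
  constructor
  · rintro rfl; exact ⟨rfl, rfl, rfl⟩
  · rintro ⟨h0, h1, h2⟩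
    ext m; fin_cases m <;> assumption

lemma char2_two : (2:K) = 0 := CharTwo.two_eq_zero
lemma char2_two' : (2:K) = 0 := CharTwo.two_eq_zero
lemma char2_three : (3:K) = 1 := by
  have : (3:K) = 2 + 1 := by norm_num
  rw [this, char2_two, zero_add]
lemma char2_four : (4:K) = 0 := by
  have : (4:K) = 2 * 2 := by norm_num
  rw [this, char2_two, mul_zero]

lemma char2_add_eq_zero {a b : K} (h : a + b = 0) : a = b := by
  rw [CharTwo.add_eq_iff_eq_add] at h
  rw [h, zero_add]

lemma vec_add_eq_zero {a b : Fin 3 → K} (h : a + b = 0) : a = b := by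
  funext i
  have h1 := congrFun h i
  have h2 : a i + (b i + b i) = (a i + b i) + b i := by ring
  calc a i = a i + (b i + b i) := by rw [CharTwo.add_self_eq_zero, add_zero]
    _ = (a i + b i) + b i := h2
    _ = b i := by rw [show a i + b i = 0 from h1, zero_add]

lemma pow4_injective {a b : K} (h : a ^ 4 = b ^ 4) : a = b := by
  have h1 : (a + b) ^ 4 = a ^ 4 + b ^ 4 := by
    have h' : ∀ u v : K, (u + v) ^ 4 = ((u + v) ^ 2) ^ 2 := fun u v => by ring
    rw [h', CharTwo.add_sq, CharTwo.add_sq]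
    ring
  have h2 : (a + b) ^ 4 = 0 := by
    rw [h1, h, CharTwo.add_self_eq_zero]
  exact char2_add_eq_zero (pow_eq_zero_iff (by norm_num : 4 ≠ 0) |>.mp h2)

/-- canonical pattern exponent: e_i + e_j + 2 e_m -/
noncomputable def pat (i j m : Fin 3) : Fin 3 →₀ ℕ := single i 1 + single j 1 + single m 2

lemma work0 (d : Fin 3 →₀ ℕ) (hd : d 0 + d 1 + d 2 = 4) (a : K) (x : Fin 3 → K) :
    eval x (pderiv 0 (monomial d a)) =
      x 1 * (∑ m, coeff (pat 0 1 m) (monomial d a) * x m ^ 2) +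
      x 2 * (∑ m, coeff (pat 0 2 m) (monomial d a) * x m ^ 2) := by
  obtain ⟨v0, v1, v2, rfl, hv⟩ : ∃ a0 a1 a2, d = single 0 a0 + single 1 a1 + single 2 a2 ∧
      a0 + a1 + a2 = 4 := by
    refine ⟨d 0, d 1, d 2, ?_, hd⟩
    ext m; fin_cases m <;> simp [Finsupp.single_apply]
  clear hd
  have h0 : v0 = 0 ∨ v0 = 1 ∨ v0 = 2 ∨ v0 = 3 ∨ v0 = 4 := by omega
  have h1 : v1 = 0 ∨ v1 = 1 ∨ v1 = 2 ∨ v1 = 3 ∨ v1 = 4 := by omega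
  have h2 : v2 = 0 ∨ v2 = 1 ∨ v2 = 2 ∨ v2 = 3 ∨ v2 = 4 := by omega
  rcases h0 with rfl|rfl|rfl|rfl|rfl <;> rcases h1 with rfl|rfl|rfl|rfl|rfl <;>
    rcases h2 with rfl|rfl|rfl|rfl|rfl <;> (try omega) <;>
    simp [pat, pderiv_monomial, coeff_monomial, eval_monomial, Fin.sum_univ_three,
      Finsupp.prod_fintype, Fin.prod_univ_three, Finsupp.tsub_apply, Finsupp.add_apply,
      Finsupp.single_apply, fs3_eq_iff, char2_two, char2_three, char2_four] <;> ring

lemma work1 (d : Fin 3 →₀ ℕ) (hd : d 0 + d 1 + d 2 = 4) (a : K) (x : Fin 3 → K) :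
    eval x (pderiv 1 (monomial d a)) =
      x 0 * (∑ m, coeff (pat 0 1 m) (monomial d a) * x m ^ 2) +
      x 2 * (∑ m, coeff (pat 1 2 m) (monomial d a) * x m ^ 2) := by
  obtain ⟨v0, v1, v2, rfl, hv⟩ : ∃ a0 a1 a2, d = single 0 a0 + single 1 a1 + single 2 a2 ∧
      a0 + a1 + a2 = 4 := by
    refine ⟨d 0, d 1, d 2, ?_, hd⟩
    ext m; fin_cases m <;> simp [Finsupp.single_apply]
  clear hd
  have h0 : v0 = 0 ∨ v0 = 1 ∨ v0 = 2 ∨ v0 = 3 ∨ v0 = 4 := by omega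
  have h1 : v1 = 0 ∨ v1 = 1 ∨ v1 = 2 ∨ v1 = 3 ∨ v1 = 4 := by omega
  have h2 : v2 = 0 ∨ v2 = 1 ∨ v2 = 2 ∨ v2 = 3 ∨ v2 = 4 := by omega
  rcases h0 with rfl|rfl|rfl|rfl|rfl <;> rcases h1 with rfl|rfl|rfl|rfl|rfl <;>
    rcases h2 with rfl|rfl|rfl|rfl|rfl <;> (try omega) <;>
    simp [pat, pderiv_monomial, coeff_monomial, eval_monomial, Fin.sum_univ_three,
      Finsupp.prod_fintype, Fin.prod_univ_three, Finsupp.tsub_apply, Finsupp.add_apply,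
      Finsupp.single_apply, fs3_eq_iff, char2_two, char2_three, char2_four] <;> ring

lemma work2 (d : Fin 3 →₀ ℕ) (hd : d 0 + d 1 + d 2 = 4) (a : K) (x : Fin 3 → K) :
    eval x (pderiv 2 (monomial d a)) =
      x 0 * (∑ m, coeff (pat 0 2 m) (monomial d a) * x m ^ 2) +
      x 1 * (∑ m, coeff (pat 1 2 m) (monomial d a) * x m ^ 2) := by
  obtain ⟨v0, v1, v2, rfl, hv⟩ : ∃ a0 a1 a2, d = single 0 a0 + single 1 a1 + single 2 a2 ∧
      a0 + a1 + a2 = 4 := by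
    refine ⟨d 0, d 1, d 2, ?_, hd⟩
    ext m; fin_cases m <;> simp [Finsupp.single_apply]
  clear hd
  have h0 : v0 = 0 ∨ v0 = 1 ∨ v0 = 2 ∨ v0 = 3 ∨ v0 = 4 := by omega
  have h1 : v1 = 0 ∨ v1 = 1 ∨ v1 = 2 ∨ v1 = 3 ∨ v1 = 4 := by omega
  have h2 : v2 = 0 ∨ v2 = 1 ∨ v2 = 2 ∨ v2 = 3 ∨ v2 = 4 := by omega
  rcases h0 with rfl|rfl|rfl|rfl|rfl <;> rcases h1 with rfl|rfl|rfl|rfl|rfl <;>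
    rcases h2 with rfl|rfl|rfl|rfl|rfl <;> (try omega) <;>
    simp [pat, pderiv_monomial, coeff_monomial, eval_monomial, Fin.sum_univ_three,
      Finsupp.prod_fintype, Fin.prod_univ_three, Finsupp.tsub_apply, Finsupp.add_apply,
      Finsupp.single_apply, fs3_eq_iff, char2_two, char2_three, char2_four] <;> ring

lemma support_sum4 {B : MvPolynomial (Fin 3) K} (hB : B.IsHomogeneous 4) :
    ∀ d ∈ B.support, d 0 + d 1 + d 2 = 4 := by
  intro d hd
  have h1 : Finsupp.weight 1 d = 4 := hB (MvPolynomial.mem_support_iff.mp hd)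
  have h2 : d.degree = 4 := by rwa [Finsupp.degree_eq_weight_one]
  have h3 : (∑ i, d i) = d.degree :=
    (Finset.sum_subset (Finset.subset_univ _) fun i _ hi =>
      Finsupp.notMem_support_iff.mp hi).symm
  rw [Fin.sum_univ_three] at h3
  omega

lemma key_sum (B : MvPolynomial (Fin 3) K) (x : Fin 3 → K) (i j : Fin 3) :
    (∑ m, coeff (pat i j m) B * x m ^ 2) =
      ∑ d ∈ B.support, ∑ m, coeff (pat i j m) (monomial d (coeff d B)) * x m ^ 2 := by
  rw [Finset.sum_comm]
  congr 1
  ext m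
  rw [← Finset.sum_mul]
  congr 1
  conv_lhs => rw [as_sum B]
  rw [coeff_sum]

lemma main0 (B : MvPolynomial (Fin 3) K) (hB : B.IsHomogeneous 4) (x : Fin 3 → K) :
    eval x (pderiv 0 B) =
      x 1 * (∑ m, coeff (pat 0 1 m) B * x m ^ 2) + x 2 * (∑ m, coeff (pat 0 2 m) B * x m ^ 2) := by
  rw [key_sum B x 0 1, key_sum B x 0 2]
  conv_lhs => rw [as_sum B]
  rw [map_sum, map_sum, Finset.mul_sum, Finset.mul_sum, ← Finset.sum_add_distrib]
  exact Finset.sum_congr rfl fun d hd => work0 d (support_sum4 hB d hd) _ x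

lemma main1 (B : MvPolynomial (Fin 3) K) (hB : B.IsHomogeneous 4) (x : Fin 3 → K) :
    eval x (pderiv 1 B) =
      x 0 * (∑ m, coeff (pat 0 1 m) B * x m ^ 2) + x 2 * (∑ m, coeff (pat 1 2 m) B * x m ^ 2) := by
  rw [key_sum B x 0 1, key_sum B x 1 2]
  conv_lhs => rw [as_sum B]
  rw [map_sum, map_sum, Finset.mul_sum, Finset.mul_sum, ← Finset.sum_add_distrib]
  exact Finset.sum_congr rfl fun d hd => work1 d (support_sum4 hB d hd) _ x

lemma main2 (B : MvPolynomial (Fin 3) K) (hB : B.IsHomogeneous 4) (x : Fin 3 → K) :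
    eval x (pderiv 2 B) =
      x 0 * (∑ m, coeff (pat 0 2 m) B * x m ^ 2) + x 1 * (∑ m, coeff (pat 1 2 m) B * x m ^ 2) := by
  rw [key_sum B x 0 2, key_sum B x 1 2]
  conv_lhs => rw [as_sum B]
  rw [map_sum, map_sum, Finset.mul_sum, Finset.mul_sum, ← Finset.sum_add_distrib]
  exact Finset.sum_congr rfl fun d hd => work2 d (support_sum4 hB d hd) _ x

lemma evalB_smul (B : MvPolynomial (Fin 3) K) (hB : B.IsHomogeneous 4) (c : K) (x : Fin 3 → K) :
    eval (c • x) B = c ^ 4 * eval x B := by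
  conv_lhs => rw [as_sum B]
  conv_rhs => rw [as_sum B]
  rw [map_sum, map_sum, Finset.mul_sum]
  refine Finset.sum_congr rfl fun d hd => ?_
  have h4 := support_sum4 hB d hd
  rw [eval_monomial, eval_monomial,
    Finsupp.prod_fintype _ _ (fun m => pow_zero _),
    Finsupp.prod_fintype _ _ (fun m => pow_zero _),
    Fin.prod_univ_three, Fin.prod_univ_three]
  simp only [Pi.smul_apply, smul_eq_mul]
  have key : (c * x 0) ^ (d 0) * (c * x 1) ^ (d 1) * (c * x 2) ^ (d 2)
      = c ^ (d 0 + d 1 + d 2) * ((x 0) ^ (d 0) * (x 1) ^ (d 1) * (x 2) ^ (d 2)) := by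
    rw [mul_pow, mul_pow, mul_pow, pow_add, pow_add]
    ring
  rw [key, h4]
  ring

noncomputable def patc : Fin 3 → Fin 3 → (Fin 3 →₀ ℕ)
  | 0 => pat 1 2
  | 1 => pat 0 2
  | 2 => pat 0 1

noncomputable def Amat (rt : K → K) (B : MvPolynomial (Fin 3) K) : Matrix (Fin 3) (Fin 3) K :=
  Matrix.of fun k m => rt (coeff (patc k m) B)

noncomputable def Tmap (rt : K → K) (B : MvPolynomial (Fin 3) K) (x : Fin 3 → K) : Fin 3 → K :=
  fun k => ((Amat rt B).mulVec x k) ^ 2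

lemma Tmap_eval (rt : K → K) (B : MvPolynomial (Fin 3) K) (hrt : ∀ a, rt a ^ 2 = a)
    (x : Fin 3 → K) (k : Fin 3) :
    Tmap rt B x k = ∑ m, coeff (patc k m) B * x m ^ 2 := by
  simp only [Tmap, Matrix.mulVec, dotProduct, Amat, Matrix.of_apply]
  rw [CharTwo.sum_sq]
  exact Finset.sum_congr rfl fun m _ => by rw [mul_pow, hrt]

lemma Tmap_add (rt : K → K) (B : MvPolynomial (Fin 3) K) (x y : Fin 3 → K) :
    Tmap rt B (x + y) = Tmap rt B x + Tmap rt B y := by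
  funext k
  simp only [Tmap, Matrix.mulVec_add, Pi.add_apply]
  rw [CharTwo.add_sq]

lemma Tmap_smul (rt : K → K) (B : MvPolynomial (Fin 3) K) (c : K) (x : Fin 3 → K) :
    Tmap rt B (c • x) = c ^ 2 • Tmap rt B x := by
  funext k
  simp only [Tmap, Matrix.mulVec_smul, Pi.smul_apply, smul_eq_mul]
  ring

lemma Tmap_zero_iff (rt : K → K) (B : MvPolynomial (Fin 3) K) (x : Fin 3 → K) :
    Tmap rt B x = 0 ↔ (Amat rt B).mulVec x = 0 := by
  constructor
  · intro h; funext k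
    have := congrFun h k
    simpa [Tmap, pow_eq_zero_iff] using this
  · intro h; funext k; simp [Tmap, h]

lemma cross0 (rt : K → K) (B : MvPolynomial (Fin 3) K) (hrt : ∀ a, rt a ^ 2 = a)
    (hB : B.IsHomogeneous 4) (x : Fin 3 → K) :
    eval x (pderiv 0 B) = x 1 * Tmap rt B x 2 + x 2 * Tmap rt B x 1 := by
  rw [main0 B hB x, Tmap_eval rt B hrt, Tmap_eval rt B hrt]
  rfl

lemma cross1 (rt : K → K) (B : MvPolynomial (Fin 3) K) (hrt : ∀ a, rt a ^ 2 = a)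
    (hB : B.IsHomogeneous 4) (x : Fin 3 → K) :
    eval x (pderiv 1 B) = x 0 * Tmap rt B x 2 + x 2 * Tmap rt B x 0 := by
  rw [main1 B hB x, Tmap_eval rt B hrt, Tmap_eval rt B hrt]
  rfl

lemma cross2 (rt : K → K) (B : MvPolynomial (Fin 3) K) (hrt : ∀ a, rt a ^ 2 = a)
    (hB : B.IsHomogeneous 4) (x : Fin 3 → K) :
    eval x (pderiv 2 B) = x 0 * Tmap rt B x 1 + x 1 * Tmap rt B x 0 := by
  rw [main2 B hB x, Tmap_eval rt B hrt, Tmap_eval rt B hrt]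
  rfl

lemma collinear {x w : Fin 3 → K} (hx : x ≠ 0)
    (h01 : x 0 * w 1 = x 1 * w 0) (h02 : x 0 * w 2 = x 2 * w 0)
    (h12 : x 1 * w 2 = x 2 * w 1) : ∃ c : K, w = c • x := by
  obtain ⟨i, hi⟩ : ∃ i, x i ≠ 0 := Function.ne_iff.mp hx
  refine ⟨w i / x i, ?_⟩
  funext j
  simp only [Pi.smul_apply, smul_eq_mul]
  rw [div_mul_eq_mul_div, eq_div_iff hi]
  have hi3 : i = 0 ∨ i = 1 ∨ i = 2 := by omega
  have hj3 : j = 0 ∨ j = 1 ∨ j = 2 := by omega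
  rcases hi3 with rfl | rfl | rfl <;> rcases hj3 with rfl | rfl | rfl <;>
    first
      | ring1
      | linear_combination h01
      | linear_combination h02
      | linear_combination h12
      | linear_combination -h01
      | linear_combination -h02
      | linear_combination -h12

end Char2Aux

section Count
variable {K : Type*} [Field K] [CharP K 2]
variable (T : (Fin 3 → K) → (Fin 3 → K))

/-- sums of nonempty subsets are nonzero -/
def SumsNZ (s : Finset (Fin 3 → K)) : Prop := ∀ t ⊆ s, t.Nonempty → ∑ v ∈ t, v ≠ 0

lemma indep_aux (hadd : ∀ x y, T (x + y) = T x + T y)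
    (hsmul : ∀ (c : K) x, T (c • x) = c ^ 2 • T x) :
    ∀ (n : ℕ) (s : Finset (Fin 3 → K)), s.card ≤ n → (∀ v ∈ s, T v = v) →
      (∀ t ⊆ s, t.Nonempty → ∑ v ∈ t, v ≠ 0) →
      ∀ f : (Fin 3 → K) → K, (∑ v ∈ s, f v • v) = 0 → ∀ v ∈ s, f v = 0 := by
  have hT : ∀ (s : Finset (Fin 3 → K)) (g : (Fin 3 → K) → (Fin 3 → K)),
      T (∑ v ∈ s, g v) = ∑ v ∈ s, T (g v) :=
    fun s g => map_sum (AddMonoidHom.mk' T hadd) g s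
  intro n
  classical
  induction n with
  | zero => intro s hcard _ _ f _ v hv
            interval_cases hs : s.card
            · simp [Finset.card_eq_zero.mp hs] at hv
  | succ n ih =>
    intro s hcard hfix hsum f hrel v hv
    by_contra hfv
    -- c := f v ≠ 0
    set c := f v with hc
    -- second relation by applying T
    have hrel2 : (∑ w ∈ s, (f w) ^ 2 • w) = 0 := by
      have := congrArg T hrel
      rw [hT s (fun w => f w • w)] at this
      have h0 : T 0 = 0 := by
        have := hadd 0 0; simpa using this
      rw [h0] at this
      rw [← this]
      exact (Finset.sum_congr rfl fun w hw => by rw [hsmul, hfix w hw]).symm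
    -- combined relation supported away from v
    set h : (Fin 3 → K) → K := fun w => (f w / c) ^ 2 + (f w / c) with hh
    have hrel3 : (∑ w ∈ s.erase v, h w • w) = 0 := by
      have hv0 : h v = 0 := by
        have h1 : f v / c = 1 := by rw [← hc]; exact div_self hfv
        simp only [hh, h1, one_pow, CharTwo.add_self_eq_zero]
      have : (∑ w ∈ s, h w • w) = 0 := by
        have : (∑ w ∈ s, h w • w)
            = (c^2)⁻¹ • (∑ w ∈ s, (f w)^2 • w) + c⁻¹ • (∑ w ∈ s, f w • w) := by
          rw [Finset.smul_sum, Finset.smul_sum, ← Finset.sum_add_distrib]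
          refine Finset.sum_congr rfl fun w hw => ?_
          rw [smul_smul, smul_smul, ← add_smul]
          congr 1
          rw [hh]
          field_simp
          try ring
        rw [this, hrel, hrel2, smul_zero, smul_zero, add_zero]
      rwa [← Finset.add_sum_erase s _ hv, hv0, zero_smul, zero_add] at this
    have hall : ∀ w ∈ s.erase v, h w = 0 := by
      refine ih (s.erase v) ?_ (fun w hw => hfix w (Finset.mem_of_mem_erase hw))
        (fun t ht hne => hsum t (ht.trans (Finset.erase_subset _ _)) hne) h hrel3
      have := Finset.card_erase_of_mem hv
      omega
    -- so all f w ∈ {0, c}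
    have hzc : ∀ w ∈ s, f w = 0 ∨ f w = c := by
      intro w hw
      rcases eq_or_ne w v with rfl | hne
      · right; rfl
      · have hw' : w ∈ s.erase v := Finset.mem_erase.mpr ⟨hne, hw⟩
        have h0 := hall w hw'
        simp only [hh] at h0
        have : (f w / c) * (f w / c + 1) = 0 := by
          rw [← h0]; ring
        rcases mul_eq_zero.mp this with h1 | h1
        · left; field_simp at h1; simpa using h1
        · right
          have : f w / c = 1 := by
            have := CharTwo.neg_eq (R := K) 1
            have h2 : f w / c = -1 := by linear_combination h1
            rw [h2, this]
          field_simp at this; tauto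
    -- the subset with coefficient c sums to zero: contradiction
    set t := s.filter (fun w => f w ≠ 0) with htdef
    have htsub : t ⊆ s := Finset.filter_subset _ _
    have htne : t.Nonempty := ⟨v, Finset.mem_filter.mpr ⟨hv, hfv⟩⟩
    have : (∑ w ∈ t, w) = 0 := by
      have h1 : (∑ w ∈ t, f w • w) = 0 :=
        calc (∑ w ∈ t, f w • w) = ∑ w ∈ s, f w • w := Finset.sum_subset htsub (fun w hw hnw => by
              have hz : f w = 0 := by simpa [htdef, hw] using hnw
              rw [hz, zero_smul])
          _ = 0 := hrel
      have h2 : (∑ w ∈ t, f w • w) = c • ∑ w ∈ t, w := by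
        rw [Finset.smul_sum]
        refine Finset.sum_congr rfl fun w hw => ?_
        have hw' := Finset.mem_filter.mp hw
        rcases hzc w hw'.1 with h | h
        · exact absurd h hw'.2
        · rw [h]
      rw [h2] at h1
      exact (smul_eq_zero.mp h1).resolve_left hfv
    exact hsum t htsub htne this

lemma li_of (hadd : ∀ x y, T (x + y) = T x + T y)
    (hsmul : ∀ (c : K) x, T (c • x) = c ^ 2 • T x)
    (s : Finset (Fin 3 → K)) (hfix : ∀ v ∈ s, T v = v) (hsum : SumsNZ s) :
    LinearIndependent K (fun x => x : s → (Fin 3 → K)) := by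
  classical
  rw [linearIndependent_iff']
  intro t g hrel i hit
  set f : (Fin 3 → K) → K := fun w => if h : w ∈ s then (if ⟨w, h⟩ ∈ t then g ⟨w, h⟩ else 0) else 0
    with hf
  have key : (∑ w ∈ s, f w • w) = 0 := by
    rw [← Finset.sum_attach s (fun w => f w • w)]
    have h1 : ∀ i : {x // x ∈ s}, f ↑i • (i : Fin 3 → K) = (if i ∈ t then g i else 0) • ↑i := by
      intro i
      congr 1
      simp only [hf, i.2, dif_pos, Subtype.coe_eta]
    rw [Finset.sum_congr rfl fun i _ => h1 i]
    rw [← Finset.sum_subset (fun i (_ : i ∈ t) => Finset.mem_attach s i) (fun i _ hni => by rw [if_neg hni, zero_smul])]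
    rw [← hrel]
    exact Finset.sum_congr rfl fun i hi => by rw [if_pos hi]
  have := indep_aux T hadd hsmul s.card s le_rfl hfix hsum f key i i.2
  simpa only [hf, i.2, dif_pos, Subtype.coe_eta, if_pos hit] using this

lemma card_le3 (hadd : ∀ x y, T (x + y) = T x + T y)
    (hsmul : ∀ (c : K) x, T (c • x) = c ^ 2 • T x)
    (s : Finset (Fin 3 → K)) (hfix : ∀ v ∈ s, T v = v) (hsum : SumsNZ s) :
    s.card ≤ 3 := by
  have h := (li_of T hadd hsmul s hfix hsum).finset_card_le_finrank
  rwa [Module.finrank_fintype_fun_eq_card, Fintype.card_fin] at h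

lemma card_le2 (hadd : ∀ x y, T (x + y) = T x + T y)
    (hsmul : ∀ (c : K) x, T (c • x) = c ^ 2 • T x)
    (ψ : (Fin 3 → K) →ₗ[K] K) (hψ : ψ ≠ 0)
    (s : Finset (Fin 3 → K)) (hfix : ∀ v ∈ s, T v = v) (hsum : SumsNZ s)
    (hker : ∀ v ∈ s, ψ v = 0) :
    s.card ≤ 2 := by
  have hli := li_of T hadd hsmul s hfix hsum
  have hli2 : LinearIndependent K
      (fun i : s => (⟨(i : Fin 3 → K), LinearMap.mem_ker.mpr (hker i i.2)⟩ :
        LinearMap.ker ψ)) := by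
    apply LinearIndependent.of_comp (LinearMap.ker ψ).subtype
    convert hli
    rfl
  have hcard := hli2.fintype_card_le_finrank
  rw [Fintype.card_coe] at hcard
  have hrange : LinearMap.range ψ = ⊤ := by
    obtain ⟨x, hx⟩ : ∃ x, ψ x ≠ 0 := by
      by_contra h
      push_neg at h
      exact hψ (by ext v; simp [h])
    rw [LinearMap.range_eq_top]
    intro a
    exact ⟨(a / ψ x) • x, by rw [map_smul, smul_eq_mul, div_mul_cancel₀ _ hx]⟩
  have hrk := LinearMap.finrank_range_add_finrank_ker ψ
  rw [hrange, finrank_top, Module.finrank_self, Module.finrank_fintype_fun_eq_card,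
    Fintype.card_fin] at hrk
  omega

/-- the covering lemma: if all SumsNZ subsets of V have card ≤ m then V \ {0} has
at most 2^m - 1 elements. -/
lemma cover (V : Set (Fin 3 → K)) (m : ℕ)
    (hcard : ∀ s : Finset (Fin 3 → K), ↑s ⊆ V → SumsNZ s → s.card ≤ m) :
    (V \ {0}).Finite ∧ (V \ {0}).ncard ≤ 2 ^ m - 1 := by
  classical
  set P : ℕ → Prop := fun n => ∃ s : Finset (Fin 3 → K), ↑s ⊆ V ∧ SumsNZ s ∧ s.card = n with hP
  have hP0 : P 0 := ⟨∅, by simp, fun t ht hne => absurd (Finset.subset_empty.mp ht) hne.ne_empty,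
    rfl⟩
  have hspec : P (Nat.findGreatest P m) := Nat.findGreatest_spec (Nat.zero_le m) hP0
  obtain ⟨s₀, hs₀V, hs₀NZ, hs₀card⟩ := hspec
  set Sums : Finset (Fin 3 → K) :=
    (s₀.powerset.filter Finset.Nonempty).image (fun t => ∑ v ∈ t, v) with hSums
  have hsub : V \ {0} ⊆ ↑Sums := by
    intro v hv
    obtain ⟨hvV, hv0⟩ := hv
    simp only [Set.mem_singleton_iff] at hv0
    by_contra hnot
    -- v is not a subset sum of s₀; extend s₀
    have hvs₀ : v ∉ s₀ := by
      intro hmem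
      refine hnot ?_
      simp only [hSums, Finset.coe_image, Set.mem_image, Finset.mem_coe, Finset.mem_filter]
      exact ⟨{v}, by simp [Finset.singleton_subset_iff.mpr hmem], by simp⟩
    have hP' : P (s₀.card + 1) := by
      refine ⟨insert v s₀, ?_, ?_, by rw [Finset.card_insert_of_notMem hvs₀]⟩
      · intro w hw
        rcases Finset.mem_insert.mp hw with rfl | hw'
        · exact hvV
        · exact hs₀V hw'
      · intro t ht hne hzero
        by_cases hvt : v ∈ t
        · have herase : t.erase v ⊆ s₀ := Finset.subset_insert_iff.mp ht
          have hsplit : v + ∑ w ∈ t.erase v, w = 0 :=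
            (Finset.add_sum_erase t (fun w => w) hvt).trans hzero
          have hveq : v = ∑ w ∈ t.erase v, w := vec_add_eq_zero hsplit
          rcases Finset.eq_empty_or_nonempty (t.erase v) with he | hne'
          · rw [he] at hveq; simp at hveq; exact hv0 hveq
          · refine hnot ?_
            simp only [hSums, Finset.coe_image, Set.mem_image, Finset.mem_coe,
              Finset.mem_filter, Finset.mem_powerset]
            exact ⟨t.erase v, ⟨herase, hne'⟩, hveq.symm⟩
        · have : t ⊆ s₀ := fun w hw => by
            rcases Finset.mem_insert.mp (ht hw) with rfl | h
            · exact absurd hw hvt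
            · exact h
          exact hs₀NZ t this hne hzero
    have hle : s₀.card + 1 ≤ m := by
      obtain ⟨s', _, hNZ', hcard'⟩ := hP'
      have := hcard s' ‹↑s' ⊆ V› hNZ'
      omega
    have := Nat.findGreatest_is_greatest (by omega : Nat.findGreatest P m < s₀.card + 1) hle
    exact this hP'
  have hfin : (↑Sums : Set (Fin 3 → K)).Finite := Sums.finite_toSet
  refine ⟨hfin.subset hsub, ?_⟩
  have h1 : (V \ {0}).ncard ≤ Sums.card := by
    rw [← Set.ncard_coe_finset]
    exact Set.ncard_le_ncard hsub hfin
  have h2 : Sums.card ≤ 2 ^ m - 1 := by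
    have ha : Sums.card ≤ (s₀.powerset.filter Finset.Nonempty).card := Finset.card_image_le
    have hb : (s₀.powerset.filter Finset.Nonempty).card ≤ s₀.powerset.card - 1 := by
      have hss : s₀.powerset.filter Finset.Nonempty ⊆ s₀.powerset.erase ∅ := by
        intro t htm
        rw [Finset.mem_erase]
        rw [Finset.mem_filter] at htm
        exact ⟨htm.2.ne_empty, htm.1⟩
      calc (s₀.powerset.filter Finset.Nonempty).card ≤ (s₀.powerset.erase ∅).card :=
            Finset.card_le_card hss
        _ = s₀.powerset.card - 1 := Finset.card_erase_of_mem (Finset.empty_mem_powerset s₀)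
    have hc : s₀.powerset.card = 2 ^ s₀.card := Finset.card_powerset s₀
    have hd : s₀.card ≤ m := hcard s₀ hs₀V hs₀NZ
    have : (2:ℕ) ^ s₀.card ≤ 2 ^ m := Nat.pow_le_pow_right (by norm_num) hd
    omega
  omega


end Count

/-- the normal quartic `X = {z⁴ + B(x₁,x₂,x₃) = 0} ⊂ ℙ³` in characteristic 2
has at most 7 singular points. -/
theorem stmt_12 (K : Type*) [Field K] [IsAlgClosed K] [CharP K 2]
    (B : MvPolynomial (Fin 3) K) (hB : B.IsHomogeneous 4)
    (F : MvPolynomial (Fin 4) K)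
    (hF : F = X 3 ^ 4 + rename (Fin.castSucc : Fin 3 → Fin 4) B)
    (hfin : {p : Projectivization K (Fin 4 → K) |
        eval p.rep F = 0 ∧ ∀ i, eval p.rep (pderiv i F) = 0}.Finite) :
    {p : Projectivization K (Fin 4 → K) |
        eval p.rep F = 0 ∧ ∀ i, eval p.rep (pderiv i F) = 0}.ncard ≤ 7 := by
  classical
  obtain ⟨rt, hrt⟩ : ∃ rt : K → K, ∀ a, rt a ^ 2 = a := by
    refine ⟨fun a => Classical.choose (IsAlgClosed.exists_pow_nat_eq a two_pos), fun a => ?_⟩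
    exact Classical.choose_spec (IsAlgClosed.exists_pow_nat_eq a two_pos)
  obtain ⟨ν, hν⟩ : ∃ ν : K → K, ∀ a, ν a ^ 4 = a := by
    refine ⟨fun a => Classical.choose (IsAlgClosed.exists_pow_nat_eq a (by norm_num : (0:ℕ) < 4)),
      fun a => ?_⟩
    exact Classical.choose_spec (IsAlgClosed.exists_pow_nat_eq a (by norm_num : (0:ℕ) < 4))
  set S : Set (Projectivization K (Fin 4 → K)) := {p : Projectivization K (Fin 4 → K) |
      eval p.rep F = 0 ∧ ∀ i, eval p.rep (pderiv i F) = 0} with hSdef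
  set A : Matrix (Fin 3) (Fin 3) K := Amat rt B with hA
  set T : (Fin 3 → K) → (Fin 3 → K) := Tmap rt B with hT
  -- `pderiv i (p^2) = 0` in char 2
  have sq_pderiv : ∀ (i : Fin 4) (p : MvPolynomial (Fin 4) K), pderiv i (p ^ 2) = 0 := by
    intro i p
    rw [pow_two, pderiv_mul, mul_comm p (pderiv i p), CharTwo.add_self_eq_zero]
  have hX34 : (X 3 ^ 4 : MvPolynomial (Fin 4) K) = (X 3 ^ 2) ^ 2 := by ring
  -- the last partial derivative of a renamed polynomial vanishes
  have hpd_last_rename : ∀ q : MvPolynomial (Fin 3) K,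
      pderiv 3 (rename (Fin.castSucc : Fin 3 → Fin 4) q) = 0 := by
    intro q
    induction q using MvPolynomial.induction_on with
    | C a => rw [rename_C, pderiv_C]
    | add p q hp hq => rw [map_add, map_add, hp, hq, add_zero]
    | mul_X p i hp =>
        rw [map_mul, rename_X, pderiv_mul, hp, zero_mul, zero_add, pderiv_X_of_ne, mul_zero]
        exact (Fin.castSucc_lt_last i).ne
  have hpd3 : pderiv 3 F = 0 := by
    rw [hF, map_add, hX34, sq_pderiv, hpd_last_rename, add_zero]
  have hpdc : ∀ m : Fin 3, pderiv (Fin.castSucc m) F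
      = rename (Fin.castSucc : Fin 3 → Fin 4) (pderiv m B) := by
    intro m
    rw [hF, map_add, hX34, sq_pderiv, zero_add, pderiv_rename (Fin.castSucc_injective 3)]
  have hFeval : ∀ y : Fin 4 → K, eval y F = (y 3) ^ 4 + eval (y ∘ Fin.castSucc) B := by
    intro y
    rw [hF, map_add, map_pow, eval_rename, eval_X]
  have h3last : (3 : Fin 4) = Fin.last 3 := rfl
  -- membership characterization
  have hmem : ∀ p : Projectivization K (Fin 4 → K), p ∈ S ↔
      ((p.rep 3) ^ 4 = eval (p.rep ∘ Fin.castSucc) B ∧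
        ∀ m : Fin 3, eval (p.rep ∘ Fin.castSucc) (pderiv m B) = 0) := by
    intro p
    constructor
    · rintro ⟨h1, h2⟩
      constructor
      · rw [hFeval] at h1
        exact char2_add_eq_zero h1
      · intro m
        have := h2 (Fin.castSucc m)
        rwa [hpdc m, eval_rename] at this
    · rintro ⟨h1, h2⟩
      constructor
      · rw [hFeval, h1, CharTwo.add_self_eq_zero]
      · intro i
        refine Fin.lastCases ?_ (fun m => ?_) i
        · rw [← h3last, hpd3, map_zero]
        · rw [hpdc m, eval_rename]
          exact h2 m
  -- nonvanishing of snoc vectors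
  have snoc_ne : ∀ (x : Fin 3 → K) (z : K), x ≠ 0 → Fin.snoc x z ≠ (0 : Fin 4 → K) := by
    intro x z hx h0
    apply hx
    funext m
    have := congrFun h0 (Fin.castSucc m)
    rwa [Fin.snoc_castSucc] at this
  haveI hne : Nonempty (Projectivization K (Fin 4 → K)) :=
    ⟨Projectivization.mk K (Fin.snoc 0 1) (by
      intro h
      have := congrFun h (Fin.last 3)
      rw [Fin.snoc_last] at this
      exact one_ne_zero this)⟩
  set g : (Fin 3 → K) → Projectivization K (Fin 4 → K) := fun x =>
    if hx : x ≠ 0 then Projectivization.mk K (Fin.snoc x (ν (eval x B))) (snoc_ne _ _ hx)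
    else Classical.ofNonempty with hg
  have hg_eq : ∀ (x : Fin 3 → K) (hx : x ≠ 0),
      g x = Projectivization.mk K (Fin.snoc x (ν (eval x B))) (snoc_ne _ _ hx) := by
    intro x hx
    rw [hg]
    exact dif_pos hx
  set Vfix : Set (Fin 3 → K) := {x | T x = x} with hV
  set Nker : Set (Fin 3 → K) := {x | A.mulVec x = 0} with hN
  have hν_smul : ∀ (c : K) (x : Fin 3 → K), ν (eval (c • x) B) = c * ν (eval x B) := by
    intro c x
    apply pow4_injective
    rw [hν, evalB_smul B hB, mul_pow, hν]
  have snoc_smul : ∀ (c : K) (x : Fin 3 → K),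
      (Fin.snoc (c • x) (c * ν (eval x B)) : Fin 4 → K)
        = c • (Fin.snoc x (ν (eval x B)) : Fin 4 → K) := by
    intro c x
    funext i
    refine Fin.lastCases ?_ (fun m => ?_) i
    · simp only [Pi.smul_apply, Fin.snoc_last, smul_eq_mul]
    · simp [Fin.snoc_castSucc]
  have hg_smul : ∀ (c : K) (x : Fin 3 → K), c ≠ 0 → x ≠ 0 → g (c • x) = g x := by
    intro c x hc hx
    have hcx : c • x ≠ 0 := smul_ne_zero hc hx
    rw [hg_eq _ hx, hg_eq _ hcx, Projectivization.mk_eq_mk_iff]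
    refine ⟨Units.mk0 c hc, ?_⟩
    rw [Units.smul_def, Units.val_mk0, ← snoc_smul, hν_smul]
  -- key inclusion
  have hS_sub : S ⊆ g '' (Vfix \ {0}) ∪ g '' (Nker \ {0}) := by
    intro p hp
    obtain ⟨h1, h2⟩ := (hmem p).mp hp
    set y := p.rep with hy
    set x : Fin 3 → K := y ∘ Fin.castSucc with hx
    have hx0 : x ≠ 0 := by
      intro h0
      apply p.rep_nonzero
      have hzB : eval x B = 0 := by
        rw [h0, show (0 : Fin 3 → K) = fun _ => (0:K) from rfl, eval_zero',
          show constantCoeff B = coeff 0 B from rfl,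
          hB.coeff_eq_zero (by simp [map_zero] : (0 : Fin 3 →₀ ℕ).degree ≠ 4)]
      have hz : y 3 = 0 := by
        have := h1
        rw [hzB] at this
        exact pow_eq_zero_iff (by norm_num : 4 ≠ 0) |>.mp this
      funext i
      refine Fin.lastCases ?_ (fun m => ?_) i
      · rw [← h3last]; exact hz
      · have := congrFun h0 m
        exact this
    have hc01 : x 0 * T x 1 = x 1 * T x 0 :=
      char2_add_eq_zero (by rw [← cross2 rt B hrt hB x]; exact h2 2)
    have hc02 : x 0 * T x 2 = x 2 * T x 0 :=
      char2_add_eq_zero (by rw [← cross1 rt B hrt hB x]; exact h2 1)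
    have hc12 : x 1 * T x 2 = x 2 * T x 1 :=
      char2_add_eq_zero (by rw [← cross0 rt B hrt hB x]; exact h2 0)
    obtain ⟨c, hcol⟩ := collinear hx0 hc01 hc02 hc12
    have hsnoc : Fin.snoc x (y 3) = y := Fin.snoc_init_self y
    by_cases hc : c = 0
    · have hTx : T x = 0 := by rw [hcol, hc, zero_smul]
      refine Or.inr ⟨x, ⟨(Tmap_zero_iff rt B x).mp hTx, hx0⟩, ?_⟩
      have hz : ν (eval x B) = y 3 := pow4_injective (by rw [hν, ← h1])
      rw [hg_eq _ hx0, hz]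
      exact ((Projectivization.mk_eq_mk_iff K _ _ _ p.rep_nonzero).mpr
        ⟨1, by rw [one_smul]; exact hsnoc.symm⟩).trans (Projectivization.mk_rep p)
    · set x' : Fin 3 → K := c⁻¹ • x with hx'def
      have hx'0 : x' ≠ 0 := smul_ne_zero (inv_ne_zero hc) hx0
      have hTx' : T x' = x' := by
        rw [hx'def, hT, Tmap_smul, ← hT, hcol]
        funext k
        simp only [Pi.smul_apply, smul_eq_mul]
        field_simp
      refine Or.inl ⟨x', ⟨hTx', hx'0⟩, ?_⟩
      have hxc : x = c • x' := by
        rw [hx'def, smul_smul, mul_inv_cancel₀ hc, one_smul]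
      have hz : c * ν (eval x' B) = y 3 :=
        pow4_injective (by rw [mul_pow, hν, ← evalB_smul B hB, ← hxc, ← h1])
      have hy_eq : y = c • (Fin.snoc x' (ν (eval x' B)) : Fin 4 → K) := by
        rw [← snoc_smul, ← hxc, hz]
        exact hsnoc.symm
      rw [hg_eq _ hx'0]
      refine ((Projectivization.mk_eq_mk_iff K _ _ _ p.rep_nonzero).mpr
        ⟨(Units.mk0 c hc)⁻¹, ?_⟩).trans (Projectivization.mk_rep p)
      rw [← hy, hy_eq, Units.smul_def, smul_smul]
      simp [inv_mul_cancel₀ hc]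
  -- membership of kernel points in S
  have hgmemN : ∀ x : Fin 3 → K, x ≠ 0 → A.mulVec x = 0 → g x ∈ S := by
    intro x hx0 hAx
    rw [hg_eq _ hx0]
    obtain ⟨a, ha⟩ := Projectivization.exists_smul_eq_mk_rep K
      (Fin.snoc x (ν (eval x B))) (snoc_ne _ _ hx0)
    rw [hmem]
    have hrc : (Projectivization.mk K (Fin.snoc x (ν (eval x B)))
        (snoc_ne _ _ hx0)).rep ∘ Fin.castSucc = (a : K) • x := by
      funext m
      rw [← ha]
      simp [Fin.snoc_castSucc, Units.smul_def]
    have hr3 : (Projectivization.mk K (Fin.snoc x (ν (eval x B)))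
        (snoc_ne _ _ hx0)).rep 3 = (a : K) * ν (eval x B) := by
      rw [← ha, h3last]
      simp [Fin.snoc_last, Units.smul_def]
      exact Fin.snoc_last _ _
    have hTax : T ((a : K) • x) = 0 := by
      rw [hT, Tmap_smul, ← hT]
      have : T x = 0 := (Tmap_zero_iff rt B x).mpr hAx
      rw [this, smul_zero]
    constructor
    · rw [hr3, hrc, evalB_smul B hB, mul_pow, hν]
    · intro m
      rw [hrc]
      have hm3 : m = 0 ∨ m = 1 ∨ m = 2 := by omega
      rcases hm3 with rfl | rfl | rfl
      · rw [cross0 rt B hrt hB, ← hT, hTax]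
        simp
      · rw [cross1 rt B hrt hB, ← hT, hTax]
        simp
      · rw [cross2 rt B hrt hB, ← hT, hTax]
        simp
  -- two independent kernel vectors would make S infinite
  by_cases hbig : ∃ u w : Fin 3 → K, u ∈ Nker ∧ w ∈ Nker ∧ u ≠ 0 ∧ ∀ c : K, w ≠ c • u
  · exfalso
    obtain ⟨u, w, hu, hw, hu0, hind⟩ := hbig
    have hw0 : w ≠ 0 := fun h => hind 0 (by rw [h, zero_smul])
    have hmemt : ∀ t : K, u + t • w ≠ 0 ∧ A.mulVec (u + t • w) = 0 := by
      intro t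
      constructor
      · intro h0
        have huw : u = t • w := vec_add_eq_zero h0
        rcases eq_or_ne t 0 with rfl | ht
        · rw [zero_smul] at huw
          exact hu0 huw
        · refine hind t⁻¹ ?_
          rw [huw, smul_smul, inv_mul_cancel₀ ht, one_smul]
      · rw [Matrix.mulVec_add, Matrix.mulVec_smul, hu, hw, smul_zero, add_zero]
    have hinj : Function.Injective (fun t : K => g (u + t • w)) := by
      intro t t' htt
      simp only at htt
      have h1 := (hmemt t).1
      have h2 := (hmemt t').1
      rw [hg_eq _ h1, hg_eq _ h2, Projectivization.mk_eq_mk_iff] at htt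
      obtain ⟨a, ha⟩ := htt
      have hcomp : ∀ m, (a : K) * (u m + t' * w m) = u m + t * w m := by
        intro m
        have := congrFun ha (Fin.castSucc m)
        simp only [Pi.smul_apply, Fin.snoc_castSucc, Units.smul_def, Pi.add_apply,
          smul_eq_mul] at this
        linear_combination this
      have hre : ((a : K) + 1) • u = (t + (a : K) * t') • w := by
        funext m
        simp only [Pi.smul_apply, Pi.add_apply, smul_eq_mul]
        linear_combination hcomp m + (u m - (a : K) * t' * w m) * char2_two' (K := K)
      by_cases hA1 : (a : K) + 1 = 0
      · -- a = 1, so t • w = t' • w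
        have ha1 : (a : K) = 1 := char2_add_eq_zero hA1
        obtain ⟨m, hm⟩ := Function.ne_iff.mp hw0
        have hmm := hcomp m
        rw [ha1, one_mul] at hmm
        have hcan : t' * w m = t * w m := by linear_combination hmm
        exact (mul_right_cancel₀ hm hcan).symm
      · exfalso
        have hu_eq : u = (((a : K) + 1)⁻¹ * (t + (a : K) * t')) • w := by
          have := congrArg (fun v => ((a : K) + 1)⁻¹ • v) hre
          simpa [smul_smul, inv_mul_cancel₀ hA1] using this
        rcases eq_or_ne (((a : K) + 1)⁻¹ * (t + (a : K) * t')) 0 with hz | hz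
        · rw [hz, zero_smul] at hu_eq
          exact hu0 hu_eq
        · refine hind (((a : K) + 1)⁻¹ * (t + (a : K) * t'))⁻¹ ?_
          rw [hu_eq, smul_smul, inv_mul_cancel₀ hz, one_smul]
    have : S.Infinite :=
      Set.infinite_of_injective_forall_mem hinj
        (fun t => hgmemN _ (hmemt t).1 (hmemt t).2)
    exact this hfin
  push_neg at hbig
  have hTadd : ∀ x y, T (x + y) = T x + T y := by
    intro x y; rw [hT]; exact Tmap_add rt B x y
  have hTsmul : ∀ (c : K) x, T (c • x) = c ^ 2 • T x := by
    intro c x; rw [hT]; exact Tmap_smul rt B c x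
  rcases Set.eq_empty_or_nonempty (Nker \ {0}) with hNe | hNne
  · -- empty kernel case : bound 7
    have hcard3 : ∀ s : Finset (Fin 3 → K), ↑s ⊆ Vfix → SumsNZ s → s.card ≤ 3 := by
      intro s hsV hNZ
      exact card_le3 T hTadd hTsmul s (fun v hv => hsV hv) hNZ
    obtain ⟨hVfin, hVcard⟩ := cover Vfix 3 hcard3
    have hsub2 : S ⊆ g '' (Vfix \ {0}) := by
      intro p hp
      rcases hS_sub hp with h | h
      · exact h
      · exfalso
        obtain ⟨x, hx, -⟩ := h
        rw [hNe] at hx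
        exact hx
    calc S.ncard ≤ (g '' (Vfix \ {0})).ncard := Set.ncard_le_ncard hsub2 (hVfin.image g)
      _ ≤ (Vfix \ {0}).ncard := Set.ncard_image_le hVfin
      _ ≤ 2 ^ 3 - 1 := hVcard
      _ ≤ 7 := by norm_num
  · -- nonempty kernel case : bound 3 + 1
    obtain ⟨u, hu⟩ := hNne
    have hu0 : u ≠ 0 := by simpa using hu.2
    have hdet : A.det = 0 := Matrix.exists_mulVec_eq_zero_iff.mp ⟨u, hu0, hu.1⟩
    obtain ⟨cv, hcv0, hcvA⟩ : ∃ v, v ≠ 0 ∧ A.transpose.mulVec v = 0 := by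
      have : ∃ v, v ≠ 0 ∧ A.transpose.mulVec v = 0 := by
        have h := Matrix.exists_mulVec_eq_zero_iff.mpr
          (show A.transpose.det = 0 by rw [Matrix.det_transpose]; exact hdet)
        obtain ⟨v, hv1, hv2⟩ := h
        exact ⟨v, hv1, hv2⟩
      exact this
    set ψ : (Fin 3 → K) →ₗ[K] K :=
      { toFun := fun x => ∑ k, (cv k) ^ 2 * x k,
        map_add' := fun x y => by
          simp only [Pi.add_apply, mul_add]
          rw [Finset.sum_add_distrib],
        map_smul' := fun r x => by
          simp only [Pi.smul_apply, smul_eq_mul, RingHom.id_apply]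
          rw [Finset.mul_sum]
          exact Finset.sum_congr rfl fun k _ => by ring } with hψdef
    have hψ0 : ψ ≠ 0 := by
      obtain ⟨k, hk⟩ := Function.ne_iff.mp hcv0
      intro hcontra
      have h1 := LinearMap.congr_fun hcontra (Pi.single k 1)
      simp only [hψdef, LinearMap.coe_mk, AddHom.coe_mk, LinearMap.zero_apply] at h1
      rw [Finset.sum_eq_single k (fun j _ hj => by simp [Pi.single_apply, hj])
        (fun h => absurd (Finset.mem_univ k) h)] at h1
      rw [Pi.single_eq_same, mul_one] at h1
      exact pow_ne_zero 2 (fun hc => hk (by rw [hc]; rfl)) h1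
    have hkerV : ∀ v, v ∈ Vfix → ψ v = 0 := by
      intro v hv
      have hfixv : T v = v := hv
      have hcomp : ∀ k, v k = ((A.mulVec v) k) ^ 2 := by
        intro k
        conv_lhs => rw [← hfixv]
        rfl
      have hstep : ψ v = ∑ k, (cv k) ^ 2 * ((A.mulVec v) k) ^ 2 := by
        simp only [hψdef, LinearMap.coe_mk, AddHom.coe_mk]
        exact Finset.sum_congr rfl fun k _ => by rw [← hcomp k]
      rw [hstep]
      have h2 : ∑ k, (cv k) ^ 2 * ((A.mulVec v) k) ^ 2
          = (∑ k, cv k * (A.mulVec v) k) ^ 2 := by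
        rw [CharTwo.sum_sq]
        exact Finset.sum_congr rfl fun k _ => by rw [mul_pow]
      rw [h2]
      have h3 : ∑ k, cv k * (A.mulVec v) k = 0 := by
        have hvm : Matrix.vecMul cv A = 0 := by
          rw [← Matrix.mulVec_transpose]
          exact hcvA
        calc ∑ k, cv k * (A.mulVec v) k = dotProduct cv (A.mulVec v) := rfl
          _ = dotProduct (Matrix.vecMul cv A) v := Matrix.dotProduct_mulVec cv A v
          _ = 0 := by rw [hvm, zero_dotProduct]
      rw [h3]
      exact zero_pow (by norm_num)
    have hcard2 : ∀ s : Finset (Fin 3 → K), ↑s ⊆ Vfix → SumsNZ s → s.card ≤ 2 := by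
      intro s hsV hNZ
      exact card_le2 T hTadd hTsmul ψ hψ0 s (fun v hv => hsV hv) hNZ
        (fun v hv => hkerV v (hsV hv))
    obtain ⟨hVfin, hVcard⟩ := cover Vfix 2 hcard2
    have hNim : g '' (Nker \ {0}) ⊆ {g u} := by
      rintro - ⟨w, hw, rfl⟩
      obtain ⟨c, hc⟩ := hbig u w hu.1 hw.1 hu0
      have hc0 : c ≠ 0 := by
        rintro rfl
        rw [zero_smul] at hc
        exact hw.2 (Set.mem_singleton_iff.mpr hc)
      rw [hc, hg_smul c u hc0 hu0]
      rfl
    calc S.ncard ≤ (g '' (Vfix \ {0}) ∪ g '' (Nker \ {0})).ncard := by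
          refine Set.ncard_le_ncard hS_sub ?_
          exact (hVfin.image g).union ((Set.finite_singleton (g u)).subset hNim)
      _ ≤ (g '' (Vfix \ {0})).ncard + (g '' (Nker \ {0})).ncard := Set.ncard_union_le _ _
      _ ≤ (Vfix \ {0}).ncard + 1 := by
          refine Nat.add_le_add (Set.ncard_image_le hVfin) ?_
          calc (g '' (Nker \ {0})).ncard ≤ ({g u} : Set _).ncard :=
                Set.ncard_le_ncard hNim (Set.finite_singleton _)
            _ = 1 := Set.ncard_singleton _
      _ ≤ (2 ^ 2 - 1) + 1 := Nat.add_le_add hVcard le_rfl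
      _ ≤ 7 := by norm_num
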